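/- If K is a zero-dimensional compact Hausdorff topological space, then γ*(C(K)) = 1, where C(K) is the Banach space of real-valued continuous functions on K with the supremum norm; that is, for every r > 1 there exists an additive subgroup of C(K) that is 2-separated and r-dense. -/
import Mathlib


open Set Metric ENNReal

universe u

/-- A set `P` in a normed space is `r`-separated if `‖x - y‖ ≥ r`
for all distinct `x, y ∈ P`. -/
def IsRSeparated {X : Type u} [NormedAddCommGroup X] (r : ℝ) (P : Set X) : Prop :=
  ∀ x ∈ P, ∀ y ∈ P, x ≠ y → r ≤ ‖x - y‖

/-- A set `P` in a normed space is `r`-dense if every point of the space is within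
distance `r` of some point of `P`. -/
def IsRDense {X : Type u} [NormedAddCommGroup X] (r : ℝ) (P : Set X) : Prop :=
  ∀ x : X, ∃ p ∈ P, ‖x - p‖ ≤ r

/-- The simultaneous packing and covering constant `γ(X)`: the infimum of all `r > 0`
for which `X` contains a set that is simultaneously `2`-separated and `r`-dense. -/
noncomputable def packingCovering (X : Type u) [NormedAddCommGroup X] : ℝ :=
  sInf {r : ℝ | 0 < r ∧ ∃ P : Set X, IsRSeparated 2 P ∧ IsRDense r P}

/-- The lattice simultaneous packing and covering constant `γ*(X)`: the infimum of all
`r > 0` for which `X` contains an additive subgroup that is simultaneously `2`-separated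
and `r`-dense. -/
noncomputable def packingCoveringStar (X : Type u) [NormedAddCommGroup X] : ℝ :=
  sInf {r : ℝ | 0 < r ∧ ∃ D : AddSubgroup X,
    IsRSeparated 2 (D : Set X) ∧ IsRDense r (D : Set X)}

/-- The Kottman constant `K(X)`: the supremum of all `r > 0` such that the closed unit
ball of `X` contains an infinite `r`-separated set. -/
noncomputable def kottman (X : Type u) [NormedAddCommGroup X] : ℝ :=
  sSup {r : ℝ | 0 < r ∧ ∃ P : Set X,
    P ⊆ closedBall (0 : X) 1 ∧ P.Infinite ∧ IsRSeparated r P}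

/-- The `κ`-Kottman constant `K(X; κ)`: the supremum of all `r > 0` such that the closed
unit ball of `X` contains an `r`-separated set of cardinality `κ`. -/
noncomputable def kottmanCard (X : Type u) [NormedAddCommGroup X] (κ : Cardinal.{u}) : ℝ :=
  sSup {r : ℝ | 0 < r ∧ ∃ P : Set X,
    P ⊆ closedBall (0 : X) 1 ∧ Cardinal.mk ↥P = κ ∧ IsRSeparated r P}

/-- The density character of a topological space: the smallest cardinality of a dense
subset. -/
noncomputable def densChar (X : Type u) [TopologicalSpace X] : Cardinal.{u} :=
  sInf {c : Cardinal.{u} | ∃ s : Set X, Dense s ∧ Cardinal.mk ↥s = c}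

/-- The modulus of local uniform rotundity `δ_X(x₀, ε)` at a point `x₀`. -/
noncomputable def lurModulus {X : Type u} [NormedAddCommGroup X] (x₀ : X) (ε : ℝ) : ℝ :=
  sInf {d : ℝ | ∃ y : X, ‖y‖ ≤ 1 ∧ ε ≤ ‖x₀ - y‖ ∧ d = 1 - ‖x₀ + y‖ / 2}

/-- `x₀` is a LUR (locally uniformly rotund) point of the unit ball of `X` if it lies on
the unit sphere and `δ_X(x₀, ε) > 0` for every `ε ∈ (0, 2]`. -/
def IsLURPoint {X : Type u} [NormedAddCommGroup X] (x₀ : X) : Prop :=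
  ‖x₀‖ = 1 ∧ ∀ ε : ℝ, 0 < ε → ε ≤ 2 → 0 < lurModulus x₀ ε

/-- The modulus of convexity `δ_X(ε)` of a normed space `X`. -/
noncomputable def convexityModulus (X : Type u) [NormedAddCommGroup X] (ε : ℝ) : ℝ :=
  sInf {d : ℝ | ∃ x y : X, ‖x‖ ≤ 1 ∧ ‖y‖ ≤ 1 ∧ ε ≤ ‖x - y‖ ∧ d = 1 - ‖x + y‖ / 2}

/-- The tangential modulus of convexity `φ_X(t)`, defined through Birkhoff-James
orthogonality: `φ_X(t) = inf {‖x + t v‖ - 1 : x, v ∈ S_X, x ⊥_BJ v}`. -/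
noncomputable def tangentialModulus (X : Type u) [NormedAddCommGroup X]
    [NormedSpace ℝ X] (t : ℝ) : ℝ :=
  sInf {d : ℝ | ∃ x v : X, ‖x‖ = 1 ∧ ‖v‖ = 1 ∧
    (∀ lam : ℝ, ‖x‖ ≤ ‖x + lam • v‖) ∧ d = ‖x + t • v‖ - 1}

/-- `φ : [0,∞) → [0,∞)` is a positive modulus: `φ(0) = 0`, `φ` is continuous at `0`,
`t ↦ φ(t)/t` is non-decreasing on `(0,∞)`, and `φ(t) > 0` for `t > 0`. -/
def IsPositiveModulus (φ : ℝ → ℝ) : Prop :=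
  φ 0 = 0 ∧ Filter.Tendsto φ (nhdsWithin 0 (Set.Ici 0)) (nhds 0) ∧
    (∀ s t : ℝ, 0 < s → s ≤ t → φ s / s ≤ φ t / t) ∧ ∀ t : ℝ, 0 < t → 0 < φ t

/-- The positive modulus `φ_p(t) = (1 + t^p)^(1/p) - 1` (real exponents). -/
noncomputable def phiP (p : ℝ) (t : ℝ) : ℝ := (1 + t ^ p) ^ (1 / p) - 1

/-- A normed space `X` is `(<κ)-octahedral` if for every `ε > 0` and every closed
subspace `Z` of `X` of density character `< κ` there is a unit vector `x` with
`‖z + λ x‖ ≥ (1 - ε)(‖z‖ + |λ|)` for all `z ∈ Z`, `λ ∈ ℝ`. -/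
def KappaOctahedral (κ : Cardinal.{u}) (X : Type u) [NormedAddCommGroup X]
    [NormedSpace ℝ X] : Prop :=
  ∀ ε : ℝ, 0 < ε → ∀ Z : Submodule ℝ X, IsClosed (Z : Set X) → densChar ↥Z < κ →
    ∃ x : X, ‖x‖ = 1 ∧ ∀ z ∈ Z, ∀ lam : ℝ, (1 - ε) * (‖z‖ + |lam|) ≤ ‖z + lam • x‖

/-- A normed space `X` is `(<κ)-φ-octahedral` if for every `ε > 0` and every closed
subspace `Z` of `X` of density character `< κ` there is a unit vector `x` with
`‖z + λ x‖ ≥ (1 - ε)(1 + φ(|λ|))` for all `z` in the unit sphere of `Z` and `λ ∈ ℝ`. -/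
def PhiOctahedral (κ : Cardinal.{u}) (φ : ℝ → ℝ) (X : Type u) [NormedAddCommGroup X]
    [NormedSpace ℝ X] : Prop :=
  ∀ ε : ℝ, 0 < ε → ∀ Z : Submodule ℝ X, IsClosed (Z : Set X) → densChar ↥Z < κ →
    ∃ x : X, ‖x‖ = 1 ∧ ∀ z ∈ Z, ‖z‖ = 1 →
      ∀ lam : ℝ, (1 - ε) * (1 + φ |lam|) ≤ ‖z + lam • x‖


/-- The indicator function of a clopen set, as a continuous map. -/
noncomputable def clopenIndicator {K : Type u} [TopologicalSpace K] (S : Set K)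
    (hS : IsClopen S) : ContinuousMap K ℝ :=
  ⟨S.indicator 1, continuous_indicator (by simp [hS]) continuous_const.continuousOn⟩

lemma clopenIndicator_apply {K : Type u} [TopologicalSpace K] (S : Set K)
    (hS : IsClopen S) (y : K) [Decidable (y ∈ S)] :
    clopenIndicator S hS y = if y ∈ S then 1 else 0 := by
  simp [clopenIndicator, Set.indicator_apply]

lemma key_approx {K : Type u} [TopologicalSpace K] (f : ContinuousMap K ℝ) (ε : ℝ)
    (V : K → Set K) (hV : ∀ x, IsClopen (V x)) (hVf : ∀ x, ∀ y ∈ V x, |f y - f x| < ε)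
    (t : Finset K) :
    ∀ S : Set K, IsClopen S → S ⊆ ⋃ x ∈ t, V x →
      ∃ g : ContinuousMap K ℝ, (∀ y, ∃ n : ℤ, g y = 2 * n) ∧
        (∀ y ∈ S, |f y - g y| ≤ ε + 1) ∧ ∀ y ∉ S, g y = 0 := by
  classical
  induction t using Finset.induction_on with
  | empty =>
    intro S hS hsub
    refine ⟨0, fun y => ⟨0, by simp⟩, fun y hy => ?_, fun y _ => rfl⟩
    simpa using hsub hy
  | @insert a t ha ih =>
    intro S hS hsub
    set c : ℝ := 2 * round (f a / 2) with hc_def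
    have hc : |f a - c| ≤ 1 := by
      have h2 := abs_sub_round (f a / 2)
      have : f a - c = 2 * (f a / 2 - round (f a / 2)) := by ring
      rw [this, abs_mul]
      rw [abs_of_nonneg (by norm_num : (0:ℝ) ≤ 2)]
      linarith
    obtain ⟨g₂, hg₂int, hg₂close, hg₂zero⟩ := ih (S \ V a) (hS.diff (hV a)) (by
      intro y hy
      rcases hy with ⟨hyS, hyV⟩
      have := hsub hyS
      simp only [Finset.mem_insert, Set.mem_iUnion] at this ⊢
      rcases this with ⟨x, hx, hyx⟩
      rcases hx with rfl | hx
      · exact absurd hyx hyV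
      · exact ⟨x, hx, hyx⟩)
    set χ := clopenIndicator (S ∩ V a) (hS.inter (hV a)) with hχ_def
    refine ⟨g₂ + c • χ, ?_, ?_, ?_⟩
    · intro y
      by_cases hy : y ∈ S ∩ V a
      · have hz : g₂ y = 0 := hg₂zero y (fun h => h.2 hy.2)
        refine ⟨round (f a / 2), ?_⟩
        simp [hz, hχ_def, clopenIndicator_apply, hy, hc_def]
      · obtain ⟨n, hn⟩ := hg₂int y
        refine ⟨n, ?_⟩
        simp [hn, hχ_def, clopenIndicator_apply, hy]
    · intro y hyS
      by_cases hyV : y ∈ V a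
      · have hz : g₂ y = 0 := hg₂zero y (fun h => h.2 hyV)
        have hval : (g₂ + c • χ) y = c := by
          simp [hz, hχ_def, clopenIndicator_apply, Set.mem_inter_iff, hyS, hyV]
        rw [hval]
        have h1 := hVf a y hyV
        calc |f y - c| ≤ |f y - f a| + |f a - c| := by
              have : f y - c = (f y - f a) + (f a - c) := by ring
              rw [this]; exact abs_add_le _ _
          _ ≤ ε + 1 := by linarith
      · have hval : (g₂ + c • χ) y = g₂ y := by
          simp [hχ_def, clopenIndicator_apply, Set.mem_inter_iff, hyV]
        rw [hval]
        exact hg₂close y ⟨hyS, hyV⟩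
    · intro y hyS
      have hz : g₂ y = 0 := hg₂zero y (fun h => hyS h.1)
      simp [hz, hχ_def, clopenIndicator_apply, Set.mem_inter_iff, hyS]

/-- If `K` is a zero-dimensional (equivalently, totally disconnected)
compact Hausdorff space, then `γ*(C(K)) = 1`; that is, for every `r > 1` there exists an
additive subgroup of `C(K, ℝ)` that is `2`-separated and `r`-dense. -/
theorem gammaStar_continuousMap_eq_one (K : Type u) [TopologicalSpace K] [CompactSpace K]
    [T2Space K] [TotallyDisconnectedSpace K] :
    ∀ r : ℝ, 1 < r → ∃ D : AddSubgroup (ContinuousMap K ℝ),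
      IsRSeparated 2 (D : Set (ContinuousMap K ℝ)) ∧
        IsRDense r (D : Set (ContinuousMap K ℝ)) :=  by
  classical
  intro r hr
  refine ⟨{ carrier := {f : ContinuousMap K ℝ | ∀ x, ∃ n : ℤ, f x = 2 * n}
            add_mem' := ?_
            zero_mem' := ?_
            neg_mem' := ?_ }, ?_, ?_⟩
  · rintro f g hf hg x
    obtain ⟨n, hn⟩ := hf x
    obtain ⟨m, hm⟩ := hg x
    exact ⟨n + m, by push_cast [ContinuousMap.add_apply, hn, hm]; ring⟩
  · intro x; exact ⟨0, by simp⟩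
  · rintro f hf x
    obtain ⟨n, hn⟩ := hf x
    exact ⟨-n, by push_cast [ContinuousMap.neg_apply, hn]; ring⟩
  · rintro f hf g hg hfg
    have hne : ∃ p, f p ≠ g p := by
      by_contra h
      push_neg at h
      exact hfg (ContinuousMap.ext h)
    obtain ⟨p, hp⟩ := hne
    obtain ⟨n, hn⟩ := hf p
    obtain ⟨m, hm⟩ := hg p
    have hnm : n ≠ m := by
      intro h; apply hp; rw [hn, hm, h]
    have h1 : (1 : ℝ) ≤ |(n : ℝ) - (m : ℝ)| := by
      have : (1 : ℤ) ≤ |n - m| := Int.one_le_abs (sub_ne_zero.mpr hnm)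
      calc (1:ℝ) ≤ ((|n - m| : ℤ) : ℝ) := by exact_mod_cast this
        _ = |(n : ℝ) - (m : ℝ)| := by push_cast; ring_nf
    have h2 : (2 : ℝ) ≤ |f p - g p| := by
      rw [hn, hm]
      have : (2:ℝ) * (n:ℝ) - 2 * (m:ℝ) = 2 * ((n:ℝ) - (m:ℝ)) := by ring
      rw [this, abs_mul, abs_of_nonneg (by norm_num : (0:ℝ) ≤ 2)]
      linarith
    calc (2 : ℝ) ≤ |f p - g p| := h2
      _ = ‖(f - g) p‖ := by simp [Real.norm_eq_abs]
      _ ≤ ‖f - g‖ := ContinuousMap.norm_coe_le_norm _ _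
  · intro f
    have hε : (0 : ℝ) < r - 1 := by linarith
    have hU : ∀ x : K, ∃ V : Set K, IsClopen V ∧ x ∈ V ∧
        V ⊆ f ⁻¹' Metric.ball (f x) (r - 1) := by
      intro x
      exact compact_exists_isClopen_in_isOpen
        (f.continuous.isOpen_preimage _ Metric.isOpen_ball)
        (Set.mem_preimage.mpr (Metric.mem_ball_self hε))
    choose V hVclopen hVmem hVsub using hU
    have hVf : ∀ x, ∀ y ∈ V x, |f y - f x| < r - 1 := by
      intro x y hy
      have := hVsub x hy
      simpa [Real.dist_eq] using this
    obtain ⟨t, ht⟩ := isCompact_univ.elim_finite_subcover V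
      (fun x => (hVclopen x).2) (fun y _ => Set.mem_iUnion.mpr ⟨y, hVmem y⟩)
    obtain ⟨g, hgint, hgclose, -⟩ :=
      key_approx f (r - 1) V hVclopen hVf t Set.univ isClopen_univ ht
    refine ⟨g, hgint, ?_⟩
    rw [ContinuousMap.norm_le _ (by linarith : (0:ℝ) ≤ r)]
    intro y
    have := hgclose y (Set.mem_univ y)
    simpa [Real.norm_eq_abs] using (by linarith : |f y - g y| ≤ r)
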